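/- Let n = 4f+1 be an odd prime with f odd, and suppose there exist integers x, y with n = x² + 4y², y = −1, such that the cyclotomic numbers of order 4 with respect to the generator α satisfy the f-odd table. Let e(0), e(1), e(2) ∈ {0,1} with e(0)+e(1)+e(2) ≡ 0 (mod 2), and let (a_0,a_1,a_2,a_3) be one of the tuples (s_2,s_1,s_2,s_1), (s_1,s_2,s_1,s_2), (s_6,s_2,s_6,s_2), (s_2,s_6,s_2,s_6), (s_5,s_4,s_5,s_4), (s_4,s_5,s_4,s_5), (s_3,s_5,s_3,s_5), (s_5,s_3,s_5,s_3). Then the quaternary sequence u of length 2n from Construction I satisfies R_u(τ) = ±2 for all 1 ≤ τ < 2n; in particular u is optimal. -/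

import Mathlib

/-- Cross-correlation of two sequences of length `N` over `ℤ_H`, with `ξ = exp(2πi/H)`. -/
noncomputable def crossCorr (H N : ℕ) (s t : ZMod N → ZMod H) (τ : ZMod N) : ℂ :=
  ∑ i ∈ Finset.range N,
    Complex.exp (2 * (Real.pi : ℂ) * Complex.I / (H : ℂ)) ^ ((s (i : ZMod N) - t ((i : ZMod N) + τ)).val)

/-- Cross-correlation of two binary sequences of length `N` (an integer). -/
def binCorr (N : ℕ) (s t : ZMod N → ZMod 2) (τ : ZMod N) : ℤ :=
  ∑ i ∈ Finset.range N, (-1 : ℤ) ^ ((s (i : ZMod N) + t ((i : ZMod N) + τ)).val)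

/-- Cross-correlation of two quaternary sequences of length `N`, with `ξ = √-1`. -/
noncomputable def quadCorr (N : ℕ) (s t : ZMod N → ZMod 4) (τ : ZMod N) : ℂ :=
  ∑ i ∈ Finset.range N, Complex.I ^ ((s (i : ZMod N) - t ((i : ZMod N) + τ)).val)

/-- Interleaving `u = I(a, b)`: `u(2i) = a(i)`, `u(2i+1) = b(i)`. -/
def interleaveSeq {H : ℕ} (n : ℕ) (a b : ZMod n → ZMod H) : ZMod (2 * n) → ZMod H :=
  fun k => if k.val % 2 = 0 then a ((k.val / 2 : ℕ) : ZMod n) else b ((k.val / 2 : ℕ) : ZMod n)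

/-- The inverse Gray mapping `φ⁻¹ : ℤ₂ × ℤ₂ → ℤ₄`. -/
def grayInv (a b : ZMod 2) : ZMod 4 :=
  if a = 0 then (if b = 0 then 0 else 1) else (if b = 0 then 3 else 2)

/-- Construction I: the quaternary sequence of length `2n` built from
`a₀, a₁, a₂, a₃` and bits `e₀, e₁, e₂`. -/
def constructionI (n : ℕ) (a0 a1 a2 a3 : ZMod n → ZMod 2)
    (e0 e1 e2 : ZMod 2) : ZMod (2 * n) → ZMod 4 :=
  let lam : ZMod n := (((n + 1) / 2 : ℕ) : ZMod n)
  let c := interleaveSeq n a0 (fun i => e0 + a1 (i + lam))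
  let d := interleaveSeq n (fun i => e1 + a2 i) (fun i => e2 + a3 (i + lam))
  fun i => grayInv (c i) (d i)

/-- The cyclotomic class `D_i` of order 4 w.r.t. the generator `α`. -/
def cycClass (n f : ℕ) (α : ZMod n) (i : ℕ) : Set (ZMod n) :=
  {x | ∃ t < f, x = α ^ (4 * t + i)}

/-- The cyclotomic number `(i, j)` of order 4: `|(D_i + 1) ∩ D_j|`. -/
noncomputable def cycNum (n f : ℕ) (α : ZMod n) (i j : ℕ) : ℕ :=
  Set.ncard {x : ZMod n | x - 1 ∈ cycClass n f α i ∧ x ∈ cycClass n f α j}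

open Classical in
/-- The binary sequence of length `n` with support set `D_i ∪ D_j`. -/
noncomputable def cycSeq (n f : ℕ) (α : ZMod n) (i j : ℕ) : ZMod n → ZMod 2 :=
  fun x => if x ∈ cycClass n f α i ∪ cycClass n f α j then 1 else 0

/-- Six binary sequences with supports `D₀∪D₁, D₀∪D₂, D₀∪D₃, D₁∪D₂, D₁∪D₃, D₂∪D₃`. -/
noncomputable def sixSeq (n f : ℕ) (α : ZMod n) : Fin 6 → ZMod n → ZMod 2
  | 0 => cycSeq n f α 0 1
  | 1 => cycSeq n f α 0 2
  | 2 => cycSeq n f α 0 3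
  | 3 => cycSeq n f α 1 2
  | 4 => cycSeq n f α 1 3
  | 5 => cycSeq n f α 2 3

/-- 16 times the cyclotomic numbers of order 4 in the `f` odd case. -/
def oddTable16 (n x y : ℤ) (i j : ℕ) : ℤ :=
  match i, j with
  | 0, 0 => n - 7 + 2*x
  | 0, 1 => n + 1 + 2*x - 8*y
  | 0, 2 => n + 1 - 6*x
  | 0, 3 => n + 1 + 2*x + 8*y
  | 1, 0 => n - 3 - 2*x
  | 1, 1 => n - 3 - 2*x
  | 1, 2 => n + 1 + 2*x + 8*y
  | 1, 3 => n + 1 + 2*x - 8*y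
  | 2, 0 => n - 7 + 2*x
  | 2, 1 => n - 3 - 2*x
  | 2, 2 => n - 7 + 2*x
  | 2, 3 => n - 3 - 2*x
  | 3, 0 => n - 3 - 2*x
  | 3, 1 => n + 1 + 2*x + 8*y
  | 3, 2 => n + 1 + 2*x - 8*y
  | 3, 3 => n - 3 - 2*x
  | _, _ => 0

/-- 16 times the cyclotomic numbers of order 4 in the `f` even case. -/
def evenTable16 (n x y : ℤ) (i j : ℕ) : ℤ :=
  match i, j with
  | 0, 0 => n - 11 - 6*x
  | 0, 1 => n - 3 + 2*x + 8*y
  | 0, 2 => n - 3 + 2*x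
  | 0, 3 => n - 3 + 2*x - 8*y
  | 1, 0 => n - 3 + 2*x + 8*y
  | 1, 1 => n - 3 + 2*x - 8*y
  | 1, 2 => n + 1 - 2*x
  | 1, 3 => n + 1 - 2*x
  | 2, 0 => n - 3 + 2*x
  | 2, 1 => n + 1 - 2*x
  | 2, 2 => n - 3 + 2*x
  | 2, 3 => n + 1 - 2*x
  | 3, 0 => n - 3 + 2*x - 8*y
  | 3, 1 => n + 1 - 2*x
  | 3, 2 => n + 1 - 2*x
  | 3, 3 => n - 3 + 2*x + 8*y
  | _, _ => 0


noncomputable def Bc (n : ℕ) [NeZero n] (s t : ZMod n → ZMod 2) (ρ : ZMod n) : ℂ :=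
  ∑ i : ZMod n, (-1:ℂ) ^ ((s i + t (i + ρ)).val)

lemma negOnePow (z : ZMod 2) : (-1:ℂ)^(z.val) = if z = 0 then 1 else -1 := by
  rcases (by decide : ∀ z : ZMod 2, z = 0 ∨ z = 1) z with rfl | rfl <;>
    simp (config := { decide := true }) [show (1:ZMod 2).val = 1 from rfl]

lemma IPow (w : ZMod 4) : Complex.I^(w.val) =
    if w = 0 then 1 else if w = 1 then Complex.I else if w = 2 then -1 else -Complex.I := by
  rcases (by decide : ∀ w : ZMod 4, w = 0 ∨ w = 1 ∨ w = 2 ∨ w = 3) w with rfl | rfl | rfl | rfl <;>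
    norm_num (config := { decide := true }) [show (1:ZMod 4).val = 1 from rfl,
      show (2:ZMod 4).val = 2 from rfl, show (3:ZMod 4).val = 3 from rfl, pow_succ, Complex.I_mul_I]

lemma neg_one_val_add (x y : ZMod 2) :
    ((-1:ℂ)) ^ ((x + y).val) = (-1) ^ (x.val) * (-1) ^ (y.val) := by
  rw [negOnePow, negOnePow, negOnePow]
  rcases (by decide : ∀ z : ZMod 2, z = 0 ∨ z = 1) x with rfl | rfl <;>
    rcases (by decide : ∀ z : ZMod 2, z = 0 ∨ z = 1) y with rfl | rfl <;>
    simp (config := { decide := true })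

lemma gray_corr (a b a' b' : ZMod 2) :
    (Complex.I) ^ ((grayInv a b - grayInv a' b').val) * 2
      = ((-1:ℂ)) ^ ((b + b').val) + (-1) ^ ((a + a').val)
        + Complex.I * ((-1) ^ ((a + b').val) - (-1) ^ ((b + a').val)) := by
  rw [IPow, negOnePow, negOnePow, negOnePow, negOnePow]
  fin_cases a <;> fin_cases b <;> fin_cases a' <;> fin_cases b' <;>
    simp (config := { decide := true }) only [grayInv] <;> norm_num

lemma sum_range_two_mul (m : ℕ) (g : ℕ → ℂ) :
    ∑ i ∈ Finset.range (2 * m), g i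
      = ∑ i ∈ Finset.range m, g (2 * i) + ∑ i ∈ Finset.range m, g (2 * i + 1) := by
  induction m with
  | zero => simp
  | succ k ih =>
    have h2 : 2 * (k + 1) = 2 * k + 1 + 1 := by ring
    rw [h2, Finset.sum_range_succ, Finset.sum_range_succ, ih, Finset.sum_range_succ,
      Finset.sum_range_succ]
    ring

lemma sum_range_zmod (n : ℕ) [NeZero n] (g : ZMod n → ℂ) :
    ∑ i ∈ Finset.range n, g (i : ZMod n) = ∑ z : ZMod n, g z := by
  apply Finset.sum_bij' (fun (i : ℕ) (_ : i ∈ Finset.range n) => (i : ZMod n))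
    (fun (z : ZMod n) (_ : z ∈ Finset.univ) => z.val)
  · intro a _; exact Finset.mem_univ _
  · intro z _; exact Finset.mem_range.mpr (ZMod.val_lt z)
  · intro a ha; exact ZMod.val_natCast_of_lt (Finset.mem_range.mp ha)
  · intro z _; simp [ZMod.natCast_val]
  · intro a _; rfl

section Reduce
variable {n : ℕ} [NeZero n]

lemma range_to_Bc (s t : ZMod n → ZMod 2) (σ : ℕ) :
    ∑ i ∈ Finset.range n, (-1:ℂ) ^ ((s (i : ZMod n) + t (((i + σ : ℕ)) : ZMod n)).val)
      = Bc n s t ((σ : ℕ) : ZMod n) := by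
  rw [Bc, ← sum_range_zmod n (fun z => (-1:ℂ)^((s z + t (z + (σ : ZMod n))).val))]
  refine Finset.sum_congr rfl fun i _ => ?_
  congr 2
  push_cast
  ring

lemma Bc_shift_both (s t : ZMod n → ZMod 2) (lam ρ : ZMod n) :
    Bc n (fun z => s (z + lam)) (fun z => t (z + lam)) ρ = Bc n s t ρ := by
  rw [Bc, Bc]
  rw [← Equiv.sum_comp (Equiv.addRight lam) (fun z => (-1:ℂ)^((s z + t (z + ρ)).val))]
  refine Finset.sum_congr rfl fun z _ => ?_
  simp only [Equiv.coe_addRight]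
  congr 3
  ring

lemma Bc_absorb (s t : ZMod n → ZMod 2) (lam ρ : ZMod n) :
    Bc n s (fun z => t (z + lam)) ρ = Bc n s t (ρ + lam) := by
  rw [Bc, Bc]
  refine Finset.sum_congr rfl fun z _ => ?_
  congr 3
  ring

lemma Bc_shift_left (s t : ZMod n → ZMod 2) (lam ρ : ZMod n) :
    Bc n (fun z => s (z + lam)) t ρ = Bc n s t (ρ - lam) := by
  rw [Bc, Bc]
  rw [← Equiv.sum_comp (Equiv.addRight lam) (fun z => (-1:ℂ)^((s z + t (z + (ρ - lam))).val))]
  refine Finset.sum_congr rfl fun z _ => ?_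
  simp only [Equiv.coe_addRight]
  congr 3
  ring

lemma sum_sign_extract (m : ℕ) (e : ZMod 2) (g : ℕ → ZMod 2) :
    ∑ i ∈ Finset.range m, (-1:ℂ)^((e + g i).val)
      = (-1:ℂ)^(e.val) * ∑ i ∈ Finset.range m, (-1:ℂ)^((g i).val) := by
  rw [Finset.mul_sum]
  exact Finset.sum_congr rfl fun i _ => neg_one_val_add e (g i)

lemma zmod2_cancel : ∀ e x y : ZMod 2, (e + x) + (e + y) = x + y := by decide
lemma zmod2_cancel2 : ∀ e e' x y : ZMod 2, (e + x) + (e' + y) = (e + e') + (x + y) := by decide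
lemma zmod2_pull : ∀ e x y : ZMod 2, x + (e + y) = e + (x + y) := by decide
lemma zmod2_he1 : ∀ e0 e1 e2 : ZMod 2, e0 + e1 + e2 = 0 → e1 + e2 = e0 := by decide
lemma zmod2_he2 : ∀ e0 e1 e2 : ZMod 2, e0 + e1 + e2 = 0 → e0 + e1 = e2 := by decide

lemma quad_reduce (hodd : n % 2 = 1)
    (a0 a1 : ZMod n → ZMod 2) (e0 e1 e2 : ZMod 2) (he : e0 + e1 + e2 = 0) (τ : ℕ) :
    quadCorr (2*n) (constructionI n a0 a1 a0 a1 e0 e1 e2)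
      (constructionI n a0 a1 a0 a1 e0 e1 e2) ((τ : ℕ) : ZMod (2*n)) =
    if τ % 2 = 0 then
      Bc n a0 a0 (((τ/2 : ℕ)) : ZMod n) + Bc n a1 a1 (((τ/2 : ℕ)) : ZMod n)
    else
      (-1:ℂ)^(e0.val) * (Bc n a0 a1 ((((τ/2 : ℕ)) : ZMod n) + (((n+1)/2 : ℕ) : ZMod n))
        + Bc n a1 a0 ((((τ/2 : ℕ)) : ZMod n) + (((n+1)/2 : ℕ) : ZMod n))) := by
  haveI : NeZero (2*n) := ⟨by have := NeZero.pos n; omega⟩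
  set lam : ZMod n := (((n+1)/2 : ℕ) : ZMod n) with hlamdef
  have hlam2 : lam + lam = 1 := by
    rw [hlamdef, ← Nat.cast_add]
    have h1 : (n+1)/2 + (n+1)/2 = n + 1 := by omega
    rw [h1]
    push_cast
    simp
  set Cs : ℕ → ZMod 2 := fun k => if k % 2 = 0 then a0 ((k/2 : ℕ) : ZMod n)
      else e0 + a1 (((k/2 : ℕ) : ZMod n) + lam) with hCs
  set Ds : ℕ → ZMod 2 := fun k => if k % 2 = 0 then e1 + a0 ((k/2 : ℕ) : ZMod n)
      else e2 + a1 (((k/2 : ℕ) : ZMod n) + lam) with hDs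
  have hdiv : ∀ k : ℕ, (((k % (2*n)) / 2 : ℕ) : ZMod n) = ((k / 2 : ℕ) : ZMod n) := by
    intro k
    have hmod := Nat.div_add_mod k (2*n)
    set q := k / (2*n) with hq
    set r := k % (2*n) with hr
    have hkqr : k = 2*n*q + r := by omega
    have h2 : k / 2 = r / 2 + n * q := by
      rw [hkqr, show 2*n*q + r = r + (n*q)*2 by ring,
        Nat.add_mul_div_right _ _ (by norm_num : 0 < 2)]
    rw [h2]
    push_cast
    simp
  have hUk : ∀ k : ℕ, constructionI n a0 a1 a0 a1 e0 e1 e2 ((k : ℕ) : ZMod (2*n))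
      = grayInv (Cs k) (Ds k) := by
    intro k
    have hval : ((k : ZMod (2*n))).val = k % (2*n) := ZMod.val_natCast _ k
    have hpar : k % (2*n) % 2 = k % 2 := Nat.mod_mod_of_dvd k ⟨n, rfl⟩
    show grayInv _ _ = _
    unfold interleaveSeq
    rw [hCs, hDs]
    simp only [hval, hpar, hdiv k]
    rfl
  have hQ : quadCorr (2*n) (constructionI n a0 a1 a0 a1 e0 e1 e2)
      (constructionI n a0 a1 a0 a1 e0 e1 e2) ((τ : ℕ) : ZMod (2*n))
      = ∑ i ∈ Finset.range (2*n),
        Complex.I ^ ((grayInv (Cs i) (Ds i) - grayInv (Cs (i+τ)) (Ds (i+τ))).val) := by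
    rw [quadCorr]
    refine Finset.sum_congr rfl fun i _ => ?_
    have hcast : ((i : ZMod (2*n)) + ((τ : ℕ) : ZMod (2*n))) = (((i + τ : ℕ)) : ZMod (2*n)) := by
      push_cast; ring
    rw [hcast, hUk, hUk]
  have hQ2 : quadCorr (2*n) (constructionI n a0 a1 a0 a1 e0 e1 e2)
      (constructionI n a0 a1 a0 a1 e0 e1 e2) ((τ : ℕ) : ZMod (2*n))
      = ((∑ i ∈ Finset.range (2*n), (-1:ℂ)^((Ds i + Ds (i+τ)).val))
        + (∑ i ∈ Finset.range (2*n), (-1:ℂ)^((Cs i + Cs (i+τ)).val))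
        + Complex.I * ((∑ i ∈ Finset.range (2*n), (-1:ℂ)^((Cs i + Ds (i+τ)).val))
          - (∑ i ∈ Finset.range (2*n), (-1:ℂ)^((Ds i + Cs (i+τ)).val)))) / 2 := by
    rw [hQ]
    have hterm : ∀ i ∈ Finset.range (2*n),
        Complex.I ^ ((grayInv (Cs i) (Ds i) - grayInv (Cs (i+τ)) (Ds (i+τ))).val)
        = ((-1:ℂ)^((Ds i + Ds (i+τ)).val) + (-1:ℂ)^((Cs i + Cs (i+τ)).val)
          + Complex.I * ((-1:ℂ)^((Cs i + Ds (i+τ)).val) - (-1:ℂ)^((Ds i + Cs (i+τ)).val))) / 2 := by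
      intro i _
      rw [eq_div_iff (two_ne_zero' ℂ)]
      exact gray_corr _ _ _ _
    rw [Finset.sum_congr rfl hterm, ← Finset.sum_div]
    congr 1
    rw [Finset.sum_add_distrib, Finset.sum_add_distrib, ← Finset.mul_sum,
      Finset.sum_sub_distrib]
  -- pointwise evaluations
  have hCe : ∀ i : ℕ, Cs (2*i) = a0 ((i : ℕ) : ZMod n) := by
    intro i
    rw [hCs]
    simp only [Nat.mul_mod_right, eq_self_iff_true, if_true,
      Nat.mul_div_cancel_left i (by norm_num : 0 < 2)]
  have hCo : ∀ i : ℕ, Cs (2*i+1) = e0 + a1 (((i : ℕ) : ZMod n) + lam) := by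
    intro i
    have h1 : (2*i+1) % 2 = 1 := by omega
    have h2 : (2*i+1) / 2 = i := by omega
    rw [hCs]
    simp only [h1, h2]
    norm_num
  have hDe : ∀ i : ℕ, Ds (2*i) = e1 + a0 ((i : ℕ) : ZMod n) := by
    intro i
    rw [hDs]
    simp only [Nat.mul_mod_right, eq_self_iff_true, if_true,
      Nat.mul_div_cancel_left i (by norm_num : 0 < 2)]
  have hDo : ∀ i : ℕ, Ds (2*i+1) = e2 + a1 (((i : ℕ) : ZMod n) + lam) := by
    intro i
    have h1 : (2*i+1) % 2 = 1 := by omega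
    have h2 : (2*i+1) / 2 = i := by omega
    rw [hDs]
    simp only [h1, h2]
    norm_num
  set σ := τ / 2 with hσ
  set a1' : ZMod n → ZMod 2 := fun z => a1 (z + lam) with ha1'
  have ha1'app : ∀ w : ZMod n, a1 (w + lam) = a1' w := fun w => rfl
  rcases Nat.even_or_odd τ with hpar | hpar
  · -- τ even
    have hτ2 : τ = 2 * σ := by obtain ⟨m, hm⟩ := hpar; omega
    have hif : τ % 2 = 0 := by omega
    rw [hif, if_pos rfl, hQ2]
    have hccE : (∑ i ∈ Finset.range (2*n), (-1:ℂ)^((Cs i + Cs (i+τ)).val))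
        = Bc n a0 a0 ((σ : ℕ) : ZMod n) + Bc n a1 a1 ((σ : ℕ) : ZMod n) := by
      rw [sum_range_two_mul]
      congr 1
      · rw [← range_to_Bc a0 a0 σ]
        refine Finset.sum_congr rfl fun i _ => ?_
        have h1 : 2*i + τ = 2*(i+σ) := by omega
        show (-1:ℂ)^((Cs (2*i) + Cs (2*i+τ)).val) = _
        rw [h1, hCe, hCe]
      · rw [← Bc_shift_both a1 a1 lam ((σ : ℕ) : ZMod n), ← range_to_Bc a1' a1' σ]
        refine Finset.sum_congr rfl fun i _ => ?_
        have h1 : 2*i + 1 + τ = 2*(i+σ)+1 := by omega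
        show (-1:ℂ)^((Cs (2*i+1) + Cs (2*i+1+τ)).val) = _
        rw [h1, hCo, hCo, ha1'app, ha1'app, zmod2_cancel]
    have hddE : (∑ i ∈ Finset.range (2*n), (-1:ℂ)^((Ds i + Ds (i+τ)).val))
        = Bc n a0 a0 ((σ : ℕ) : ZMod n) + Bc n a1 a1 ((σ : ℕ) : ZMod n) := by
      rw [sum_range_two_mul]
      congr 1
      · rw [← range_to_Bc a0 a0 σ]
        refine Finset.sum_congr rfl fun i _ => ?_
        have h1 : 2*i + τ = 2*(i+σ) := by omega
        show (-1:ℂ)^((Ds (2*i) + Ds (2*i+τ)).val) = _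
        rw [h1, hDe, hDe, zmod2_cancel]
      · rw [← Bc_shift_both a1 a1 lam ((σ : ℕ) : ZMod n), ← range_to_Bc a1' a1' σ]
        refine Finset.sum_congr rfl fun i _ => ?_
        have h1 : 2*i + 1 + τ = 2*(i+σ)+1 := by omega
        show (-1:ℂ)^((Ds (2*i+1) + Ds (2*i+1+τ)).val) = _
        rw [h1, hDo, hDo, ha1'app, ha1'app, zmod2_cancel]
    have hcdE : (∑ i ∈ Finset.range (2*n), (-1:ℂ)^((Cs i + Ds (i+τ)).val))
        = (-1:ℂ)^(e1.val) * Bc n a0 a0 ((σ : ℕ) : ZMod n)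
          + (-1:ℂ)^((e0+e2).val) * Bc n a1 a1 ((σ : ℕ) : ZMod n) := by
      rw [sum_range_two_mul]
      congr 1
      · calc ∑ i ∈ Finset.range n, (-1:ℂ)^((Cs (2*i) + Ds (2*i+τ)).val)
            = ∑ i ∈ Finset.range n,
              (-1:ℂ)^((e1 + (a0 ((i:ℕ):ZMod n) + a0 (((i+σ:ℕ)):ZMod n))).val) := by
              refine Finset.sum_congr rfl fun i _ => ?_
              have h1 : 2*i + τ = 2*(i+σ) := by omega
              rw [h1, hCe, hDe, zmod2_pull]
          _ = (-1:ℂ)^(e1.val) * Bc n a0 a0 ((σ : ℕ) : ZMod n) := by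
              rw [sum_sign_extract, range_to_Bc]
      · calc ∑ i ∈ Finset.range n, (-1:ℂ)^((Cs (2*i+1) + Ds (2*i+1+τ)).val)
            = ∑ i ∈ Finset.range n,
              (-1:ℂ)^(((e0+e2) + (a1' ((i:ℕ):ZMod n) + a1' (((i+σ:ℕ)):ZMod n))).val) := by
              refine Finset.sum_congr rfl fun i _ => ?_
              have h1 : 2*i + 1 + τ = 2*(i+σ)+1 := by omega
              rw [h1, hCo, hDo, ha1'app, ha1'app, zmod2_cancel2]
          _ = (-1:ℂ)^((e0+e2).val) * Bc n a1 a1 ((σ : ℕ) : ZMod n) := by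
              rw [sum_sign_extract, range_to_Bc, Bc_shift_both]
    have hdcE : (∑ i ∈ Finset.range (2*n), (-1:ℂ)^((Ds i + Cs (i+τ)).val))
        = (-1:ℂ)^(e1.val) * Bc n a0 a0 ((σ : ℕ) : ZMod n)
          + (-1:ℂ)^((e0+e2).val) * Bc n a1 a1 ((σ : ℕ) : ZMod n) := by
      rw [sum_range_two_mul]
      congr 1
      · calc ∑ i ∈ Finset.range n, (-1:ℂ)^((Ds (2*i) + Cs (2*i+τ)).val)
            = ∑ i ∈ Finset.range n,
              (-1:ℂ)^((e1 + (a0 ((i:ℕ):ZMod n) + a0 (((i+σ:ℕ)):ZMod n))).val) := by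
              refine Finset.sum_congr rfl fun i _ => ?_
              have h1 : 2*i + τ = 2*(i+σ) := by omega
              rw [h1, hDe, hCe, add_assoc]
          _ = (-1:ℂ)^(e1.val) * Bc n a0 a0 ((σ : ℕ) : ZMod n) := by
              rw [sum_sign_extract, range_to_Bc]
      · calc ∑ i ∈ Finset.range n, (-1:ℂ)^((Ds (2*i+1) + Cs (2*i+1+τ)).val)
            = ∑ i ∈ Finset.range n,
              (-1:ℂ)^(((e2+e0) + (a1' ((i:ℕ):ZMod n) + a1' (((i+σ:ℕ)):ZMod n))).val) := by
              refine Finset.sum_congr rfl fun i _ => ?_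
              have h1 : 2*i + 1 + τ = 2*(i+σ)+1 := by omega
              rw [h1, hDo, hCo, ha1'app, ha1'app, zmod2_cancel2]
          _ = (-1:ℂ)^((e0+e2).val) * Bc n a1 a1 ((σ : ℕ) : ZMod n) := by
              rw [sum_sign_extract, range_to_Bc, Bc_shift_both, add_comm e2 e0]
    rw [hccE, hddE, hcdE, hdcE]
    ring
  · -- τ odd
    have hτ2 : τ = 2 * σ + 1 := by obtain ⟨m, hm⟩ := hpar; omega
    have hif : ¬ (τ % 2 = 0) := by omega
    rw [if_neg hif, hQ2]
    set ρ : ZMod n := ((σ : ℕ) : ZMod n) + lam with hρdef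
    have hshift : ((σ + 1 : ℕ) : ZMod n) - lam = ρ := by
      push_cast
      rw [hρdef, ← hlam2]
      ring
    have habs : Bc n a0 a1' ((σ : ℕ) : ZMod n) = Bc n a0 a1 ρ := by
      rw [ha1', Bc_absorb, hρdef]
    have hleft : Bc n a1' a0 ((σ + 1 : ℕ) : ZMod n) = Bc n a1 a0 ρ := by
      rw [ha1', Bc_shift_left, hshift]
    have hccO : (∑ i ∈ Finset.range (2*n), (-1:ℂ)^((Cs i + Cs (i+τ)).val))
        = (-1:ℂ)^(e0.val) * Bc n a0 a1 ρ + (-1:ℂ)^(e0.val) * Bc n a1 a0 ρ := by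
      rw [sum_range_two_mul]
      congr 1
      · calc ∑ i ∈ Finset.range n, (-1:ℂ)^((Cs (2*i) + Cs (2*i+τ)).val)
            = ∑ i ∈ Finset.range n,
              (-1:ℂ)^((e0 + (a0 ((i:ℕ):ZMod n) + a1' (((i+σ:ℕ)):ZMod n))).val) := by
              refine Finset.sum_congr rfl fun i _ => ?_
              have h1 : 2*i + τ = 2*(i+σ)+1 := by omega
              rw [h1, hCe, hCo, ha1'app, zmod2_pull]
          _ = (-1:ℂ)^(e0.val) * Bc n a0 a1 ρ := by
              rw [sum_sign_extract, range_to_Bc, habs]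
      · calc ∑ i ∈ Finset.range n, (-1:ℂ)^((Cs (2*i+1) + Cs (2*i+1+τ)).val)
            = ∑ i ∈ Finset.range n,
              (-1:ℂ)^((e0 + (a1' ((i:ℕ):ZMod n) + a0 (((i+(σ+1):ℕ)):ZMod n))).val) := by
              refine Finset.sum_congr rfl fun i _ => ?_
              have h1 : 2*i + 1 + τ = 2*(i+(σ+1)) := by omega
              rw [h1, hCo, hCe, ha1'app, add_assoc]
          _ = (-1:ℂ)^(e0.val) * Bc n a1 a0 ρ := by
              rw [sum_sign_extract, range_to_Bc, hleft]
    have hddO : (∑ i ∈ Finset.range (2*n), (-1:ℂ)^((Ds i + Ds (i+τ)).val))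
        = (-1:ℂ)^(e0.val) * Bc n a0 a1 ρ + (-1:ℂ)^(e0.val) * Bc n a1 a0 ρ := by
      rw [sum_range_two_mul]
      congr 1
      · calc ∑ i ∈ Finset.range n, (-1:ℂ)^((Ds (2*i) + Ds (2*i+τ)).val)
            = ∑ i ∈ Finset.range n,
              (-1:ℂ)^(((e1+e2) + (a0 ((i:ℕ):ZMod n) + a1' (((i+σ:ℕ)):ZMod n))).val) := by
              refine Finset.sum_congr rfl fun i _ => ?_
              have h1 : 2*i + τ = 2*(i+σ)+1 := by omega
              rw [h1, hDe, hDo, ha1'app, zmod2_cancel2]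
          _ = (-1:ℂ)^(e0.val) * Bc n a0 a1 ρ := by
              rw [sum_sign_extract, range_to_Bc, habs, zmod2_he1 e0 e1 e2 he]
      · calc ∑ i ∈ Finset.range n, (-1:ℂ)^((Ds (2*i+1) + Ds (2*i+1+τ)).val)
            = ∑ i ∈ Finset.range n,
              (-1:ℂ)^(((e2+e1) + (a1' ((i:ℕ):ZMod n) + a0 (((i+(σ+1):ℕ)):ZMod n))).val) := by
              refine Finset.sum_congr rfl fun i _ => ?_
              have h1 : 2*i + 1 + τ = 2*(i+(σ+1)) := by omega
              rw [h1, hDo, hDe, ha1'app, zmod2_cancel2]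
          _ = (-1:ℂ)^(e0.val) * Bc n a1 a0 ρ := by
              rw [sum_sign_extract, range_to_Bc, hleft, add_comm e2 e1,
                zmod2_he1 e0 e1 e2 he]
    have hcdO : (∑ i ∈ Finset.range (2*n), (-1:ℂ)^((Cs i + Ds (i+τ)).val))
        = (-1:ℂ)^(e2.val) * Bc n a0 a1 ρ + (-1:ℂ)^(e2.val) * Bc n a1 a0 ρ := by
      rw [sum_range_two_mul]
      congr 1
      · calc ∑ i ∈ Finset.range n, (-1:ℂ)^((Cs (2*i) + Ds (2*i+τ)).val)
            = ∑ i ∈ Finset.range n,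
              (-1:ℂ)^((e2 + (a0 ((i:ℕ):ZMod n) + a1' (((i+σ:ℕ)):ZMod n))).val) := by
              refine Finset.sum_congr rfl fun i _ => ?_
              have h1 : 2*i + τ = 2*(i+σ)+1 := by omega
              rw [h1, hCe, hDo, ha1'app, zmod2_pull]
          _ = (-1:ℂ)^(e2.val) * Bc n a0 a1 ρ := by
              rw [sum_sign_extract, range_to_Bc, habs]
      · calc ∑ i ∈ Finset.range n, (-1:ℂ)^((Cs (2*i+1) + Ds (2*i+1+τ)).val)
            = ∑ i ∈ Finset.range n,
              (-1:ℂ)^(((e0+e1) + (a1' ((i:ℕ):ZMod n) + a0 (((i+(σ+1):ℕ)):ZMod n))).val) := by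
              refine Finset.sum_congr rfl fun i _ => ?_
              have h1 : 2*i + 1 + τ = 2*(i+(σ+1)) := by omega
              rw [h1, hCo, hDe, ha1'app, zmod2_cancel2]
          _ = (-1:ℂ)^(e2.val) * Bc n a1 a0 ρ := by
              rw [sum_sign_extract, range_to_Bc, hleft, zmod2_he2 e0 e1 e2 he]
    have hdcO : (∑ i ∈ Finset.range (2*n), (-1:ℂ)^((Ds i + Cs (i+τ)).val))
        = (-1:ℂ)^(e2.val) * Bc n a0 a1 ρ + (-1:ℂ)^(e2.val) * Bc n a1 a0 ρ := by
      rw [sum_range_two_mul]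
      congr 1
      · calc ∑ i ∈ Finset.range n, (-1:ℂ)^((Ds (2*i) + Cs (2*i+τ)).val)
            = ∑ i ∈ Finset.range n,
              (-1:ℂ)^(((e1+e0) + (a0 ((i:ℕ):ZMod n) + a1' (((i+σ:ℕ)):ZMod n))).val) := by
              refine Finset.sum_congr rfl fun i _ => ?_
              have h1 : 2*i + τ = 2*(i+σ)+1 := by omega
              rw [h1, hDe, hCo, ha1'app, zmod2_cancel2]
          _ = (-1:ℂ)^(e2.val) * Bc n a0 a1 ρ := by
              rw [sum_sign_extract, range_to_Bc, habs, add_comm e1 e0,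
                zmod2_he2 e0 e1 e2 he]
      · calc ∑ i ∈ Finset.range n, (-1:ℂ)^((Ds (2*i+1) + Cs (2*i+1+τ)).val)
            = ∑ i ∈ Finset.range n,
              (-1:ℂ)^((e2 + (a1' ((i:ℕ):ZMod n) + a0 (((i+(σ+1):ℕ)):ZMod n))).val) := by
              refine Finset.sum_congr rfl fun i _ => ?_
              have h1 : 2*i + 1 + τ = 2*(i+(σ+1)) := by omega
              rw [h1, hDo, hCe, ha1'app, add_assoc]
          _ = (-1:ℂ)^(e2.val) * Bc n a1 a0 ρ := by
              rw [sum_sign_extract, range_to_Bc, hleft]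
    rw [hccO, hddO, hcdO, hdcO]
    ring
end Reduce


section Grp
variable {n f : ℕ} {α : ZMod n}
variable (hp : n.Prime) (hnf : n = 4 * f + 1) (hf : 0 < f)
  (hα : ∀ z : ZMod n, z ≠ 0 → ∃ k : ℕ, z = α ^ k)

include hp hnf hf hα

lemma alpha_ne_zero : α ≠ 0 := by
  intro h
  have h5 : 5 ≤ n := by
    rcases Nat.lt_or_ge n 5 with h' | h'
    · interval_cases n <;> omega
    · exact h'
  have h2 : (2 : ZMod n) ≠ 0 := by
    have : ((2:ℕ) : ZMod n) ≠ 0 := by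
      rw [Ne, ZMod.natCast_eq_zero_iff]
      intro hdvd
      have := Nat.le_of_dvd (by omega) hdvd
      omega
    simpa using this
  obtain ⟨k, hk⟩ := hα 2 h2
  rcases Nat.eq_zero_or_pos k with rfl | hk0
  · simp at hk
    have : ((2:ℕ) : ZMod n) = ((1:ℕ) : ZMod n) := by push_cast; exact hk
    rw [ZMod.natCast_eq_natCast_iff] at this
    have := (Nat.modEq_iff_dvd' (by norm_num)).mp this.symm
    have := Nat.le_of_dvd (by omega) this
    omega
  · rw [h, zero_pow (by omega)] at hk
    exact h2 hk

lemma order_alpha : orderOf α = 4 * f := by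
  have hne := alpha_ne_zero hp hnf hf hα
  haveI : Fact n.Prime := ⟨hp⟩
  have hpow : α ^ (n - 1) = 1 := ZMod.pow_card_sub_one_eq_one hne
  have hdvd : orderOf α ∣ n - 1 := orderOf_dvd_of_pow_eq_one hpow
  have hfin : IsOfFinOrder α := isOfFinOrder_iff_pow_eq_one.mpr ⟨n - 1, by omega, hpow⟩
  have hposo : 0 < orderOf α := hfin.orderOf_pos
  have hsub : (Finset.univ.filter (fun z : ZMod n => z ≠ 0)) ⊆
      (Finset.range (orderOf α)).image (fun k => α ^ k) := by
    intro z hz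
    simp only [Finset.mem_filter] at hz
    obtain ⟨k, hk⟩ := hα z hz.2
    refine Finset.mem_image.mpr ⟨k % orderOf α, Finset.mem_range.mpr (Nat.mod_lt _ hposo), ?_⟩
    rw [pow_mod_orderOf]; exact hk.symm
  have hcard1 : (Finset.univ.filter (fun z : ZMod n => z ≠ 0)).card = n - 1 := by
    haveI : NeZero n := ⟨hp.ne_zero⟩
    rw [Finset.filter_ne']
    rw [Finset.card_erase_of_mem (Finset.mem_univ _)]
    simp [ZMod.card]
  have hle : n - 1 ≤ orderOf α := by
    calc n - 1 = _ := hcard1.symm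
    _ ≤ ((Finset.range (orderOf α)).image (fun k => α ^ k)).card := Finset.card_le_card hsub
    _ ≤ (Finset.range (orderOf α)).card := Finset.card_image_le
    _ = orderOf α := Finset.card_range _
  have : orderOf α ≤ n - 1 := Nat.le_of_dvd (by omega) hdvd
  omega

lemma pow_mem_class (m : ℕ) : α ^ m ∈ cycClass n f α (m % 4) := by
  have hord := order_alpha hp hnf hf hα
  have h1 : α ^ m = α ^ (m % (4 * f)) := by rw [← hord]; exact (pow_mod_orderOf _ _).symm
  refine ⟨(m % (4 * f)) / 4, ?_, ?_⟩
  · have : m % (4 * f) < 4 * f := Nat.mod_lt _ (by omega)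
    omega
  · rw [h1]
    congr 1
    have h4 : (m % (4 * f)) % 4 = m % 4 := Nat.mod_mod_of_dvd m ⟨f, rfl⟩
    omega

lemma alpha_dvd_sub {u v : ℕ} (huv : u ≤ v) (h : α ^ u = α ^ v) : (4 * f) ∣ (v - u) := by
  haveI : Fact n.Prime := ⟨hp⟩
  have hne := alpha_ne_zero hp hnf hf hα
  have hord := order_alpha hp hnf hf hα
  have h1 : α ^ u * α ^ (v - u) = α ^ u * 1 := by
    rw [mul_one, ← pow_add]
    have huv3 : u + (v - u) = v := by omega
    rw [huv3, ← h]
  have h2 : α ^ (v - u) = 1 := mul_left_cancel₀ (pow_ne_zero _ hne) h1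
  have := orderOf_dvd_of_pow_eq_one h2
  rwa [hord] at this

lemma class_eq_of_mem {i j : ℕ} (hi : i < 4) (hj : j < 4) {x : ZMod n}
    (hxi : x ∈ cycClass n f α i) (hxj : x ∈ cycClass n f α j) : i = j := by
  obtain ⟨t, ht, rfl⟩ := hxi
  obtain ⟨s, hs, he⟩ := hxj
  rcases le_total (4 * t + i) (4 * s + j) with hle | hle
  · obtain ⟨c, hc⟩ := alpha_dvd_sub hp hnf hf hα hle he
    have h4 : (4:ℕ) ∣ (4 * s + j - (4 * t + i)) := ⟨f * c, by rw [hc]; ring⟩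
    omega
  · obtain ⟨c, hc⟩ := alpha_dvd_sub hp hnf hf hα hle he.symm
    have h4 : (4:ℕ) ∣ (4 * t + i - (4 * s + j)) := ⟨f * c, by rw [hc]; ring⟩
    omega

lemma mem_class_nonzero {i : ℕ} {x : ZMod n} (hx : x ∈ cycClass n f α i) : x ≠ 0 := by
  haveI : Fact n.Prime := ⟨hp⟩
  obtain ⟨t, ht, rfl⟩ := hx
  exact pow_ne_zero _ (alpha_ne_zero hp hnf hf hα)

lemma exists_class {x : ZMod n} (hx : x ≠ 0) : ∃ k < 4, x ∈ cycClass n f α k := by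
  obtain ⟨m, rfl⟩ := hα x hx
  exact ⟨m % 4, Nat.mod_lt _ (by norm_num), pow_mem_class hp hnf hf hα m⟩

lemma mul_mem_class {i j : ℕ} {x y : ZMod n} (hx : x ∈ cycClass n f α i)
    (hy : y ∈ cycClass n f α j) : x * y ∈ cycClass n f α ((i + j) % 4) := by
  obtain ⟨t, ht, rfl⟩ := hx
  obtain ⟨s, hs, rfl⟩ := hy
  rw [← pow_add]
  have : (4 * t + i + (4 * s + j)) % 4 = (i + j) % 4 := by omega
  exact this ▸ pow_mem_class hp hnf hf hα _

lemma ncard_class (i : ℕ) : (cycClass n f α i).ncard = f := by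
  classical
  have himg : cycClass n f α i
      = ↑((Finset.range f).image (fun t => α ^ (4 * t + i))) := by
    ext z
    simp only [cycClass, Set.mem_setOf_eq, Finset.coe_image, Set.mem_image,
      Finset.mem_coe, Finset.mem_range]
    constructor
    · rintro ⟨t, ht, rfl⟩; exact ⟨t, ht, rfl⟩
    · rintro ⟨t, ht, rfl⟩; exact ⟨t, ht, rfl⟩
  rw [himg, Set.ncard_coe_finset, Finset.card_image_of_injOn, Finset.card_range]
  intro t ht s hs he
  simp only [Finset.coe_range, Set.mem_Iio] at ht hs
  rcases le_total t s with hle | hle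
  · obtain ⟨c, hc⟩ := alpha_dvd_sub hp hnf hf hα (by omega : 4*t+i ≤ 4*s+i) he
    rcases Nat.eq_zero_or_pos c with rfl | hcpos
    · omega
    · have hc2 : 4 * (f * c) = 4 * f * c := by ring
      have h5 : s - t = f * c := by omega
      have h6 : f ≤ f * c := Nat.le_mul_of_pos_right f hcpos
      omega
  · obtain ⟨c, hc⟩ := alpha_dvd_sub hp hnf hf hα (by omega : 4*s+i ≤ 4*t+i) he.symm
    rcases Nat.eq_zero_or_pos c with rfl | hcpos
    · omega
    · have hc2 : 4 * (f * c) = 4 * f * c := by ring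
      have h5 : t - s = f * c := by omega
      have h6 : f ≤ f * c := Nat.le_mul_of_pos_right f hcpos
      omega

lemma inv_mem_class {k : ℕ} (hk : k < 4) {ρ : ZMod n} (hρ : ρ ∈ cycClass n f α k) :
    ρ⁻¹ ∈ cycClass n f α ((4 - k) % 4) := by
  haveI : Fact n.Prime := ⟨hp⟩
  obtain ⟨s, hs, rfl⟩ := hρ
  have hmul : α ^ (4 * s + k) * α ^ (4 * f - (4 * s + k)) = 1 := by
    rw [← pow_add]
    have h1 : 4 * s + k + (4 * f - (4 * s + k)) = 4 * f := by omega
    rw [h1, ← order_alpha hp hnf hf hα, pow_orderOf_eq_one]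
  rw [inv_eq_of_mul_eq_one_right hmul]
  have h2 := pow_mem_class hp hnf hf hα (α := α) (4 * f - (4 * s + k))
  have hmod : (4 * f - (4 * s + k)) % 4 = (4 - k) % 4 := by omega
  rwa [hmod] at h2

lemma E_eq_cycNum {k p q : ℕ} (hk : k < 4) (hpq : p < 4) (hq : q < 4)
    {ρ : ZMod n} (hρ : ρ ∈ cycClass n f α k) :
    ({z : ZMod n | z ∈ cycClass n f α p ∧ z + ρ ∈ cycClass n f α q}).ncard
      = cycNum n f α ((p + 4 - k) % 4) ((q + 4 - k) % 4) := by
  classical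
  haveI : Fact n.Prime := ⟨hp⟩
  have hρ0 : ρ ≠ 0 := mem_class_nonzero hp hnf hf hα hρ
  set p' := (p + 4 - k) % 4 with hp'
  set q' := (q + 4 - k) % 4 with hq'
  have hp4 : p' < 4 := Nat.mod_lt _ (by norm_num)
  have himg : (fun x : ZMod n => ρ * (x - 1)) ''
      {x : ZMod n | x - 1 ∈ cycClass n f α p' ∧ x ∈ cycClass n f α q'}
      = {z : ZMod n | z ∈ cycClass n f α p ∧ z + ρ ∈ cycClass n f α q} := by
    ext z
    simp only [Set.mem_image, Set.mem_setOf_eq]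
    constructor
    · rintro ⟨x, ⟨hx1, hx2⟩, rfl⟩
      constructor
      · have h3 := mul_mem_class hp hnf hf hα hρ hx1
        have hmod : (k + p') % 4 = p := by omega
        rwa [hmod] at h3
      · have h4 : ρ * (x - 1) + ρ = ρ * x := by ring
        rw [h4]
        have h3 := mul_mem_class hp hnf hf hα hρ hx2
        have hmod : (k + q') % 4 = q := by omega
        rwa [hmod] at h3
    · rintro ⟨hz1, hz2⟩
      refine ⟨z * ρ⁻¹ + 1, ⟨?_, ?_⟩, ?_⟩
      · have hinv := inv_mem_class hp hnf hf hα hk hρ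
        have h3 := mul_mem_class hp hnf hf hα hz1 hinv
        have hmod : (p + (4 - k) % 4) % 4 = p' := by omega
        simp only [add_sub_cancel_right]
        rwa [hmod] at h3
      · have hinv := inv_mem_class hp hnf hf hα hk hρ
        have heq : z * ρ⁻¹ + 1 = (z + ρ) * ρ⁻¹ := by field_simp
        rw [heq]
        have h3 := mul_mem_class hp hnf hf hα hz2 hinv
        have hmod : (q + (4 - k) % 4) % 4 = q' := by omega
        rwa [hmod] at h3
      · field_simp
        ring
  have hinj : Function.Injective (fun x : ZMod n => ρ * (x - 1)) := by
    intro a b hab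
    simp only at hab
    exact sub_left_inj.mp (mul_left_cancel₀ hρ0 hab)
  have hncard := Set.ncard_image_of_injective
    {x : ZMod n | x - 1 ∈ cycClass n f α p' ∧ x ∈ cycClass n f α q'} hinj
  rw [himg] at hncard
  rw [cycNum, ← hncard]

end Grp

lemma negOnePow_eq (x y : ZMod 2) :
    (-1:ℂ) ^ ((x + y).val) = if x = y then 1 else -1 := by
  rw [negOnePow]
  rcases (by decide : ∀ z : ZMod 2, z = 0 ∨ z = 1) x with rfl | rfl <;>
    rcases (by decide : ∀ z : ZMod 2, z = 0 ∨ z = 1) y with rfl | rfl <;>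
    simp (config := { decide := true })

section BcSec
open Finset
variable {n f : ℕ} [NeZero n] {α : ZMod n}
variable (hp : n.Prime) (hnf : n = 4 * f + 1) (hf : 0 < f)
  (hα : ∀ z : ZMod n, z ≠ 0 → ∃ k : ℕ, z = α ^ k)

lemma card_filter_eq_ncard (p : ZMod n → Prop) [DecidablePred p] :
    (univ.filter p).card = {x : ZMod n | p x}.ncard := by
  rw [← Set.ncard_coe_finset]
  congr 1
  ext z
  simp

lemma Bc_eq_ncard (s t : ZMod n → ZMod 2) (ρ : ZMod n) :
    Bc n s t ρ = (n : ℂ) - 2 * (({i : ZMod n | s i ≠ t (i + ρ)}).ncard : ℂ) := by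
  classical
  rw [Bc]
  have h1 : ∀ i : ZMod n, (-1:ℂ) ^ ((s i + t (i + ρ)).val)
      = if s i = t (i + ρ) then 1 else -1 := fun i => negOnePow_eq _ _
  rw [Finset.sum_congr rfl (fun i _ => h1 i), Finset.sum_ite, Finset.sum_const,
    Finset.sum_const]
  have h2 : (univ.filter (fun i => s i = t (i + ρ))).card
      + (univ.filter (fun i => ¬ (s i = t (i + ρ)))).card = n := by
    rw [Finset.card_filter_add_card_filter_not]
    simp [ZMod.card]
  have h4 : (univ.filter (fun i => ¬ (s i = t (i + ρ)))).card
      = ({i : ZMod n | s i ≠ t (i + ρ)}).ncard := card_filter_eq_ncard _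
  have h3 : ((univ.filter (fun i => s i = t (i + ρ))).card : ℂ)
      = (n : ℂ) - ({i : ZMod n | s i ≠ t (i + ρ)}).ncard := by
    rw [← h4]
    push_cast [← h2]
    ring
  simp only [nsmul_eq_mul, mul_one, mul_neg_one]
  rw [h3, h4]
  ring

omit [NeZero n] in
lemma cycSeq_ne_iff (a b c d : ℕ) (i j : ZMod n) :
    (cycSeq n f α a b i ≠ cycSeq n f α c d j)
      ↔ ((i ∈ cycClass n f α a ∪ cycClass n f α b ∧ j ∉ cycClass n f α c ∪ cycClass n f α d)
        ∨ (i ∉ cycClass n f α a ∪ cycClass n f α b ∧ j ∈ cycClass n f α c ∪ cycClass n f α d)) := by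
  unfold cycSeq
  by_cases hi : i ∈ cycClass n f α a ∪ cycClass n f α b <;>
    by_cases hj : j ∈ cycClass n f α c ∪ cycClass n f α d <;>
    simp [hi, hj]

lemma ncard_shift (T : Set (ZMod n)) (ρ : ZMod n) :
    ({i : ZMod n | i + ρ ∈ T}).ncard = T.ncard := by
  have himg : {i : ZMod n | i + ρ ∈ T} = (fun x => x - ρ) '' T := by
    ext i
    simp only [Set.mem_setOf_eq, Set.mem_image]
    constructor
    · intro h; exact ⟨i + ρ, h, by ring⟩
    · rintro ⟨x, hx, rfl⟩; simpa [sub_add_cancel] using hx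
  rw [himg, Set.ncard_image_of_injective]
  intro a b hab
  simpa using sub_left_inj.mp hab

include hp hnf hf hα in
lemma ncard_union_classes {a b : ℕ} (ha : a < 4) (hb : b < 4) (hab : a ≠ b) :
    (cycClass n f α a ∪ cycClass n f α b).ncard = 2 * f := by
  rw [Set.ncard_union_eq ?_ (Set.toFinite _) (Set.toFinite _),
    ncard_class hp hnf hf hα, ncard_class hp hnf hf hα]
  · ring
  · rw [Set.disjoint_left]
    intro z hz1 hz2
    exact hab (class_eq_of_mem hp hnf hf hα ha hb hz1 hz2)

lemma ncard_ne_split (a b c d : ℕ) (ρ : ZMod n) :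
    ({i : ZMod n | cycSeq n f α a b i ≠ cycSeq n f α c d (i + ρ)}).ncard
      + 2 * ({i : ZMod n | i ∈ cycClass n f α a ∪ cycClass n f α b
          ∧ i + ρ ∈ cycClass n f α c ∪ cycClass n f α d}).ncard
    = (cycClass n f α a ∪ cycClass n f α b).ncard
      + (cycClass n f α c ∪ cycClass n f α d).ncard := by
  set S := cycClass n f α a ∪ cycClass n f α b with hS
  set T := cycClass n f α c ∪ cycClass n f α d with hT
  have hne : {i : ZMod n | cycSeq n f α a b i ≠ cycSeq n f α c d (i + ρ)}
      = {i : ZMod n | i ∈ S ∧ i + ρ ∉ T} ∪ {i : ZMod n | i ∉ S ∧ i + ρ ∈ T} := by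
    ext i
    simp only [Set.mem_setOf_eq, Set.mem_union]
    exact cycSeq_ne_iff a b c d i (i + ρ)
  have h2 : ({i : ZMod n | cycSeq n f α a b i ≠ cycSeq n f α c d (i + ρ)}).ncard
      = ({i : ZMod n | i ∈ S ∧ i + ρ ∉ T}).ncard + ({i : ZMod n | i ∉ S ∧ i + ρ ∈ T}).ncard := by
    rw [hne, Set.ncard_union_eq ?_ (Set.toFinite _) (Set.toFinite _)]
    rw [Set.disjoint_left]
    rintro z ⟨hz1, _⟩ ⟨hz2, _⟩
    exact hz2 hz1
  have h3 : ({i : ZMod n | i ∈ S ∧ i + ρ ∈ T}).ncard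
        + ({i : ZMod n | i ∈ S ∧ i + ρ ∉ T}).ncard = S.ncard := by
    rw [← Set.ncard_union_eq ?_ (Set.toFinite _) (Set.toFinite _)]
    · congr 1
      ext i
      simp only [Set.mem_union, Set.mem_setOf_eq]
      constructor
      · rintro (⟨h, _⟩ | ⟨h, _⟩) <;> exact h
      · intro h; by_cases hq : i + ρ ∈ T
        · exact Or.inl ⟨h, hq⟩
        · exact Or.inr ⟨h, hq⟩
    · rw [Set.disjoint_left]
      rintro z ⟨_, hz1⟩ ⟨_, hz2⟩
      exact hz2 hz1
  have h4 : ({i : ZMod n | i ∈ S ∧ i + ρ ∈ T}).ncard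
        + ({i : ZMod n | i ∉ S ∧ i + ρ ∈ T}).ncard = T.ncard := by
    rw [← ncard_shift T ρ, ← Set.ncard_union_eq ?_ (Set.toFinite _) (Set.toFinite _)]
    · congr 1
      ext i
      simp only [Set.mem_union, Set.mem_setOf_eq]
      constructor
      · rintro (⟨_, h⟩ | ⟨_, h⟩) <;> exact h
      · intro h; by_cases hq : i ∈ S
        · exact Or.inl ⟨hq, h⟩
        · exact Or.inr ⟨hq, h⟩
    · rw [Set.disjoint_left]
      rintro z ⟨hz1, _⟩ ⟨hz2, _⟩
      exact hz2 hz1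
  omega

include hp hnf hf hα in
lemma ncST_split {a b c d : ℕ} (ha : a < 4) (hb : b < 4) (hc : c < 4) (hd : d < 4)
    (hab : a ≠ b) (hcd : c ≠ d) (ρ : ZMod n) :
    ({i : ZMod n | i ∈ cycClass n f α a ∪ cycClass n f α b
        ∧ i + ρ ∈ cycClass n f α c ∪ cycClass n f α d}).ncard
    = ({i : ZMod n | i ∈ cycClass n f α a ∧ i + ρ ∈ cycClass n f α c}).ncard
      + ({i : ZMod n | i ∈ cycClass n f α a ∧ i + ρ ∈ cycClass n f α d}).ncard
      + ({i : ZMod n | i ∈ cycClass n f α b ∧ i + ρ ∈ cycClass n f α c}).ncard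
      + ({i : ZMod n | i ∈ cycClass n f α b ∧ i + ρ ∈ cycClass n f α d}).ncard := by
  have h1 : {i : ZMod n | i ∈ cycClass n f α a ∪ cycClass n f α b
        ∧ i + ρ ∈ cycClass n f α c ∪ cycClass n f α d}
      = ({i : ZMod n | i ∈ cycClass n f α a ∧ i + ρ ∈ cycClass n f α c}
        ∪ {i : ZMod n | i ∈ cycClass n f α a ∧ i + ρ ∈ cycClass n f α d})
      ∪ ({i : ZMod n | i ∈ cycClass n f α b ∧ i + ρ ∈ cycClass n f α c}
        ∪ {i : ZMod n | i ∈ cycClass n f α b ∧ i + ρ ∈ cycClass n f α d}) := by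
    ext z
    simp only [Set.mem_union, Set.mem_setOf_eq]
    tauto
  rw [h1]
  rw [Set.ncard_union_eq ?_ (Set.toFinite _) (Set.toFinite _),
    Set.ncard_union_eq ?_ (Set.toFinite _) (Set.toFinite _),
    Set.ncard_union_eq ?_ (Set.toFinite _) (Set.toFinite _)]
  · ring
  · rw [Set.disjoint_left]
    rintro z ⟨_, hz1⟩ ⟨_, hz2⟩
    exact hcd (class_eq_of_mem hp hnf hf hα hc hd hz1 hz2)
  · rw [Set.disjoint_left]
    rintro z ⟨_, hz1⟩ ⟨_, hz2⟩
    exact hcd (class_eq_of_mem hp hnf hf hα hc hd hz1 hz2)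
  · rw [Set.disjoint_left]
    rintro z hz1 hz2
    simp only [Set.mem_union, Set.mem_setOf_eq] at hz1 hz2
    rcases hz1 with h1' | h1' <;> rcases hz2 with h2' | h2' <;>
      exact hab (class_eq_of_mem hp hnf hf hα ha hb h1'.1 h2'.1)

include hp hnf hf hα in
lemma E_zero {p q : ℕ} (hpq : p < 4) (hq : q < 4) :
    ({z : ZMod n | z ∈ cycClass n f α p ∧ z + (0:ZMod n) ∈ cycClass n f α q}).ncard
      = if p = q then f else 0 := by
  by_cases h : p = q
  · subst h
    rw [if_pos rfl]
    have h1 : {z : ZMod n | z ∈ cycClass n f α p ∧ z + (0:ZMod n) ∈ cycClass n f α p}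
        = cycClass n f α p := by
      ext z; simp
    rw [h1, ncard_class hp hnf hf hα]
  · rw [if_neg h]
    have h1 : {z : ZMod n | z ∈ cycClass n f α p ∧ z + (0:ZMod n) ∈ cycClass n f α q} = ∅ := by
      ext z
      simp only [Set.mem_setOf_eq, Set.mem_empty_iff_false, iff_false, add_zero]
      rintro ⟨h1, h2⟩
      exact h (class_eq_of_mem hp hnf hf hα hpq hq h1 h2)
    rw [h1, Set.ncard_empty]

end BcSec

section Master
variable {n f : ℕ} [NeZero n] {α : ZMod n}
variable (hp : n.Prime) (hnf : n = 4 * f + 1) (hf : 0 < f)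
  (hα : ∀ z : ZMod n, z ≠ 0 → ∃ k : ℕ, z = α ^ k)

include hp hnf hf hα in
lemma E16 {x y : ℤ}
    (hTab : ∀ i < 4, ∀ j < 4, 16 * (cycNum n f α i j : ℤ) = oddTable16 (n : ℤ) x y i j)
    {k p q : ℕ} (hk : k < 4) (hp4 : p < 4) (hq4 : q < 4)
    {ρ : ZMod n} (hρ : ρ ∈ cycClass n f α k) :
    16 * (({z : ZMod n | z ∈ cycClass n f α p ∧ z + ρ ∈ cycClass n f α q}).ncard : ℤ)
      = oddTable16 (n : ℤ) x y ((p + 4 - k) % 4) ((q + 4 - k) % 4) := by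
  rw [E_eq_cycNum hp hnf hf hα hk hp4 hq4 hρ]
  exact hTab _ (Nat.mod_lt _ (by norm_num)) _ (Nat.mod_lt _ (by norm_num))

include hp hnf hf hα in
lemma master {x y : ℤ}
    (hTab : ∀ i < 4, ∀ j < 4, 16 * (cycNum n f α i j : ℤ) = oddTable16 (n : ℤ) x y i j)
    {a b c d a' b' c' d' : ℕ}
    (ha4 : a < 4) (hb4 : b < 4) (hc4 : c < 4) (hd4 : d < 4)
    (ha4' : a' < 4) (hb4' : b' < 4) (hc4' : c' < 4) (hd4' : d' < 4)
    (hab : a ≠ b) (hcd : c ≠ d) (hab' : a' ≠ b') (hcd' : c' ≠ d')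
    (HT : ∀ k < 4,
      (oddTable16 (n:ℤ) x y ((a+4-k)%4) ((c+4-k)%4) + oddTable16 (n:ℤ) x y ((a+4-k)%4) ((d+4-k)%4)
      + oddTable16 (n:ℤ) x y ((b+4-k)%4) ((c+4-k)%4) + oddTable16 (n:ℤ) x y ((b+4-k)%4) ((d+4-k)%4)
      + oddTable16 (n:ℤ) x y ((a'+4-k)%4) ((c'+4-k)%4) + oddTable16 (n:ℤ) x y ((a'+4-k)%4) ((d'+4-k)%4)
      + oddTable16 (n:ℤ) x y ((b'+4-k)%4) ((c'+4-k)%4) + oddTable16 (n:ℤ) x y ((b'+4-k)%4) ((d'+4-k)%4))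
        = 8*(n:ℤ) - 24 ∨
      (oddTable16 (n:ℤ) x y ((a+4-k)%4) ((c+4-k)%4) + oddTable16 (n:ℤ) x y ((a+4-k)%4) ((d+4-k)%4)
      + oddTable16 (n:ℤ) x y ((b+4-k)%4) ((c+4-k)%4) + oddTable16 (n:ℤ) x y ((b+4-k)%4) ((d+4-k)%4)
      + oddTable16 (n:ℤ) x y ((a'+4-k)%4) ((c'+4-k)%4) + oddTable16 (n:ℤ) x y ((a'+4-k)%4) ((d'+4-k)%4)
      + oddTable16 (n:ℤ) x y ((b'+4-k)%4) ((c'+4-k)%4) + oddTable16 (n:ℤ) x y ((b'+4-k)%4) ((d'+4-k)%4))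
        = 8*(n:ℤ) - 8)
    (ρ : ZMod n) (hρ : ρ ≠ 0) :
    ∃ V : ℤ, Bc n (cycSeq n f α a b) (cycSeq n f α c d) ρ
      + Bc n (cycSeq n f α a' b') (cycSeq n f α c' d') ρ = (V : ℂ) ∧ (V = 2 ∨ V = -2) := by
  obtain ⟨k, hk, hρk⟩ := exists_class hp hnf hf hα hρ
  set cD1 := ({i : ZMod n | cycSeq n f α a b i ≠ cycSeq n f α c d (i + ρ)}).ncard with hcD1
  set cD2 := ({i : ZMod n | cycSeq n f α a' b' i ≠ cycSeq n f α c' d' (i + ρ)}).ncard with hcD2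
  set cst1 := ({i : ZMod n | i ∈ cycClass n f α a ∪ cycClass n f α b
      ∧ i + ρ ∈ cycClass n f α c ∪ cycClass n f α d}).ncard with hcst1
  set cst2 := ({i : ZMod n | i ∈ cycClass n f α a' ∪ cycClass n f α b'
      ∧ i + ρ ∈ cycClass n f α c' ∪ cycClass n f α d'}).ncard with hcst2
  have hB1 := Bc_eq_ncard (cycSeq n f α a b) (cycSeq n f α c d) ρ
  have hB2 := Bc_eq_ncard (cycSeq n f α a' b') (cycSeq n f α c' d') ρ
  have hs1 : cD1 + 2 * cst1 = 2 * f + 2 * f := by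
    rw [hcD1, hcst1, ncard_ne_split, ncard_union_classes hp hnf hf hα ha4 hb4 hab,
      ncard_union_classes hp hnf hf hα hc4 hd4 hcd]
  have hs2 : cD2 + 2 * cst2 = 2 * f + 2 * f := by
    rw [hcD2, hcst2, ncard_ne_split, ncard_union_classes hp hnf hf hα ha4' hb4' hab',
      ncard_union_classes hp hnf hf hα hc4' hd4' hcd']
  have hsum1 : 16 * (cst1 : ℤ) =
      oddTable16 (n:ℤ) x y ((a+4-k)%4) ((c+4-k)%4) + oddTable16 (n:ℤ) x y ((a+4-k)%4) ((d+4-k)%4)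
      + oddTable16 (n:ℤ) x y ((b+4-k)%4) ((c+4-k)%4)
      + oddTable16 (n:ℤ) x y ((b+4-k)%4) ((d+4-k)%4) := by
    rw [hcst1, ncST_split hp hnf hf hα ha4 hb4 hc4 hd4 hab hcd]
    push_cast
    rw [mul_add, mul_add, mul_add,
      E16 hp hnf hf hα hTab hk ha4 hc4 hρk, E16 hp hnf hf hα hTab hk ha4 hd4 hρk,
      E16 hp hnf hf hα hTab hk hb4 hc4 hρk, E16 hp hnf hf hα hTab hk hb4 hd4 hρk]
  have hsum2 : 16 * (cst2 : ℤ) =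
      oddTable16 (n:ℤ) x y ((a'+4-k)%4) ((c'+4-k)%4) + oddTable16 (n:ℤ) x y ((a'+4-k)%4) ((d'+4-k)%4)
      + oddTable16 (n:ℤ) x y ((b'+4-k)%4) ((c'+4-k)%4)
      + oddTable16 (n:ℤ) x y ((b'+4-k)%4) ((d'+4-k)%4) := by
    rw [hcst2, ncST_split hp hnf hf hα ha4' hb4' hc4' hd4' hab' hcd']
    push_cast
    rw [mul_add, mul_add, mul_add,
      E16 hp hnf hf hα hTab hk ha4' hc4' hρk, E16 hp hnf hf hα hTab hk ha4' hd4' hρk,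
      E16 hp hnf hf hα hTab hk hb4' hc4' hρk, E16 hp hnf hf hα hTab hk hb4' hd4' hρk]
  refine ⟨2 * (n:ℤ) - 2 * cD1 - 2 * cD2, ?_, ?_⟩
  · rw [hB1, hB2]
    push_cast
    ring
  · rcases HT k hk with h | h
    · right
      have h16 : 16 * (cst1:ℤ) + 16 * (cst2:ℤ) = 8*(n:ℤ) - 24 := by
        rw [hsum1, hsum2]; linarith
      omega
    · left
      have h16 : 16 * (cst1:ℤ) + 16 * (cst2:ℤ) = 8*(n:ℤ) - 8 := by
        rw [hsum1, hsum2]; linarith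
      omega

include hp hnf hf hα in
lemma cst_zero {a b c d : ℕ} (ha4 : a < 4) (hb4 : b < 4) (hc4 : c < 4) (hd4 : d < 4)
    (hab : a ≠ b) (hcd : c ≠ d) :
    ({i : ZMod n | i ∈ cycClass n f α a ∪ cycClass n f α b
        ∧ i + (0:ZMod n) ∈ cycClass n f α c ∪ cycClass n f α d}).ncard
      = (if a = c then f else 0) + (if a = d then f else 0)
        + (if b = c then f else 0) + (if b = d then f else 0) := by
  rw [ncST_split hp hnf hf hα ha4 hb4 hc4 hd4 hab hcd,
    E_zero hp hnf hf hα ha4 hc4, E_zero hp hnf hf hα ha4 hd4,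
    E_zero hp hnf hf hα hb4 hc4, E_zero hp hnf hf hα hb4 hd4]

include hp hnf hf hα in
lemma masterZero {a b c d : ℕ} (ha4 : a < 4) (hb4 : b < 4) (hc4 : c < 4) (hd4 : d < 4)
    (hab : a ≠ b) (hcd : c ≠ d)
    (hshare : ((if a = c then f else 0) + (if a = d then f else 0)
        + (if b = c then f else 0) + (if b = d then f else 0)) = f) :
    Bc n (cycSeq n f α a b) (cycSeq n f α c d) 0
      + Bc n (cycSeq n f α c d) (cycSeq n f α a b) 0 = (2 : ℂ) := by
  have hc1 : ({i : ZMod n | i ∈ cycClass n f α a ∪ cycClass n f α b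
      ∧ i + (0:ZMod n) ∈ cycClass n f α c ∪ cycClass n f α d}).ncard = f := by
    rw [cst_zero hp hnf hf hα ha4 hb4 hc4 hd4 hab hcd]; exact hshare
  have hc2 : ({i : ZMod n | i ∈ cycClass n f α c ∪ cycClass n f α d
      ∧ i + (0:ZMod n) ∈ cycClass n f α a ∪ cycClass n f α b}).ncard = f := by
    rw [cst_zero hp hnf hf hα hc4 hd4 ha4 hb4 hcd hab]
    rcases Nat.lt_or_ge 0 1 with _ | _
    · by_cases h1 : a = c <;> by_cases h2 : a = d <;> by_cases h3 : b = c <;> by_cases h4 : b = d <;>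
        simp [h1, h2, h3, h4, eq_comm] at hshare ⊢ <;> omega
    · omega
  have hd1 : ({i : ZMod n | cycSeq n f α a b i ≠ cycSeq n f α c d (i + (0:ZMod n))}).ncard
      = 2 * f := by
    have := ncard_ne_split (n := n) (f := f) (α := α) a b c d (0:ZMod n)
    rw [hc1, ncard_union_classes hp hnf hf hα ha4 hb4 hab,
      ncard_union_classes hp hnf hf hα hc4 hd4 hcd] at this
    omega
  have hd2 : ({i : ZMod n | cycSeq n f α c d i ≠ cycSeq n f α a b (i + (0:ZMod n))}).ncard
      = 2 * f := by
    have := ncard_ne_split (n := n) (f := f) (α := α) c d a b (0:ZMod n)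
    rw [hc2, ncard_union_classes hp hnf hf hα ha4 hb4 hab,
      ncard_union_classes hp hnf hf hα hc4 hd4 hcd] at this
    omega
  rw [Bc_eq_ncard, Bc_eq_ncard, hd1, hd2]
  have hn : (n : ℂ) = 4 * (f:ℂ) + 1 := by exact_mod_cast congrArg (Nat.cast : ℕ → ℂ) hnf
  rw [hn]
  push_cast
  ring

end Master


section Branch
open scoped Classical
variable {n f : ℕ} [NeZero n] {α : ZMod n}

lemma branch (hp : n.Prime) (hnf : n = 4 * f + 1) (hf : 0 < f)
    (hα : ∀ z : ZMod n, z ≠ 0 → ∃ k : ℕ, z = α ^ k)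
    {x y : ℤ}
    (hTab : ∀ i < 4, ∀ j < 4, 16 * (cycNum n f α i j : ℤ) = oddTable16 (n : ℤ) x y i j)
    (e0 e1 e2 : ZMod 2) (he : e0 + e1 + e2 = 0)
    (τ : ℕ) (hτ1 : 1 ≤ τ) (hτ2 : τ < 2*n)
    (p q r s : ℕ) (hp4 : p < 4) (hq4 : q < 4) (hr4 : r < 4) (hs4 : s < 4)
    (hpq : p ≠ q) (hrs : r ≠ s)
    (HTe : ∀ k < 4,
      (oddTable16 (n:ℤ) x y ((p+4-k)%4) ((p+4-k)%4) + oddTable16 (n:ℤ) x y ((p+4-k)%4) ((q+4-k)%4)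
      + oddTable16 (n:ℤ) x y ((q+4-k)%4) ((p+4-k)%4) + oddTable16 (n:ℤ) x y ((q+4-k)%4) ((q+4-k)%4)
      + oddTable16 (n:ℤ) x y ((r+4-k)%4) ((r+4-k)%4) + oddTable16 (n:ℤ) x y ((r+4-k)%4) ((s+4-k)%4)
      + oddTable16 (n:ℤ) x y ((s+4-k)%4) ((r+4-k)%4) + oddTable16 (n:ℤ) x y ((s+4-k)%4) ((s+4-k)%4))
        = 8*(n:ℤ) - 24 ∨
      (oddTable16 (n:ℤ) x y ((p+4-k)%4) ((p+4-k)%4) + oddTable16 (n:ℤ) x y ((p+4-k)%4) ((q+4-k)%4)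
      + oddTable16 (n:ℤ) x y ((q+4-k)%4) ((p+4-k)%4) + oddTable16 (n:ℤ) x y ((q+4-k)%4) ((q+4-k)%4)
      + oddTable16 (n:ℤ) x y ((r+4-k)%4) ((r+4-k)%4) + oddTable16 (n:ℤ) x y ((r+4-k)%4) ((s+4-k)%4)
      + oddTable16 (n:ℤ) x y ((s+4-k)%4) ((r+4-k)%4) + oddTable16 (n:ℤ) x y ((s+4-k)%4) ((s+4-k)%4))
        = 8*(n:ℤ) - 8)
    (HTo : ∀ k < 4,
      (oddTable16 (n:ℤ) x y ((p+4-k)%4) ((r+4-k)%4) + oddTable16 (n:ℤ) x y ((p+4-k)%4) ((s+4-k)%4)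
      + oddTable16 (n:ℤ) x y ((q+4-k)%4) ((r+4-k)%4) + oddTable16 (n:ℤ) x y ((q+4-k)%4) ((s+4-k)%4)
      + oddTable16 (n:ℤ) x y ((r+4-k)%4) ((p+4-k)%4) + oddTable16 (n:ℤ) x y ((r+4-k)%4) ((q+4-k)%4)
      + oddTable16 (n:ℤ) x y ((s+4-k)%4) ((p+4-k)%4) + oddTable16 (n:ℤ) x y ((s+4-k)%4) ((q+4-k)%4))
        = 8*(n:ℤ) - 24 ∨
      (oddTable16 (n:ℤ) x y ((p+4-k)%4) ((r+4-k)%4) + oddTable16 (n:ℤ) x y ((p+4-k)%4) ((s+4-k)%4)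
      + oddTable16 (n:ℤ) x y ((q+4-k)%4) ((r+4-k)%4) + oddTable16 (n:ℤ) x y ((q+4-k)%4) ((s+4-k)%4)
      + oddTable16 (n:ℤ) x y ((r+4-k)%4) ((p+4-k)%4) + oddTable16 (n:ℤ) x y ((r+4-k)%4) ((q+4-k)%4)
      + oddTable16 (n:ℤ) x y ((s+4-k)%4) ((p+4-k)%4) + oddTable16 (n:ℤ) x y ((s+4-k)%4) ((q+4-k)%4))
        = 8*(n:ℤ) - 8)
    (hshare : ((if p = r then f else 0) + (if p = s then f else 0)
        + (if q = r then f else 0) + (if q = s then f else 0)) = f) :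
    quadCorr (2*n)
      (constructionI n (cycSeq n f α p q) (cycSeq n f α r s)
        (cycSeq n f α p q) (cycSeq n f α r s) e0 e1 e2)
      (constructionI n (cycSeq n f α p q) (cycSeq n f α r s)
        (cycSeq n f α p q) (cycSeq n f α r s) e0 e1 e2) ((τ : ℕ) : ZMod (2*n)) = 2 ∨
    quadCorr (2*n)
      (constructionI n (cycSeq n f α p q) (cycSeq n f α r s)
        (cycSeq n f α p q) (cycSeq n f α r s) e0 e1 e2)
      (constructionI n (cycSeq n f α p q) (cycSeq n f α r s)
        (cycSeq n f α p q) (cycSeq n f α r s) e0 e1 e2) ((τ : ℕ) : ZMod (2*n)) = -2 := by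
  have hodd : n % 2 = 1 := by omega
  rw [quad_reduce hodd _ _ e0 e1 e2 he τ]
  by_cases hev : τ % 2 = 0
  · rw [if_pos hev]
    have hσ0 : ((τ/2 : ℕ) : ZMod n) ≠ 0 := by
      rw [Ne, ZMod.natCast_eq_zero_iff]
      intro hdvd
      have h1 : 1 ≤ τ / 2 := by omega
      have h2 : τ / 2 < n := by omega
      have := Nat.le_of_dvd (by omega) hdvd
      omega
    obtain ⟨V, hV, hV2⟩ := master hp hnf hf hα hTab hp4 hq4 hp4 hq4 hr4 hs4 hr4 hs4
      hpq hpq hrs hrs HTe _ hσ0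
    rw [hV]
    rcases hV2 with h | h
    · left; rw [h]; norm_num
    · right; rw [h]; norm_num
  · rw [if_neg hev]
    by_cases hρ0 : ((τ/2 : ℕ) : ZMod n) + (((n+1)/2 : ℕ) : ZMod n) = 0
    · rw [hρ0, masterZero hp hnf hf hα hp4 hq4 hr4 hs4 hpq hrs hshare]
      have hsign : (-1:ℂ)^(e0.val) = 1 ∨ (-1:ℂ)^(e0.val) = -1 := by
        rw [negOnePow]; by_cases h : e0 = 0 <;> simp [h]
      rcases hsign with h | h
      · left; rw [h]; ring
      · right; rw [h]; ring
    · obtain ⟨V, hV, hV2⟩ := master hp hnf hf hα hTab hp4 hq4 hr4 hs4 hr4 hs4 hp4 hq4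
        hpq hrs hrs hpq HTo _ hρ0
      rw [hV]
      have hsign : (-1:ℂ)^(e0.val) = 1 ∨ (-1:ℂ)^(e0.val) = -1 := by
        rw [negOnePow]; by_cases h : e0 = 0 <;> simp [h]
      rcases hV2 with h | h <;> rcases hsign with h' | h' <;> rw [h, h'] <;>
        first
          | (left; push_cast; ring1)
          | (right; push_cast; ring1)

end Branch

set_option maxHeartbeats 2000000 in
theorem stmt10 (n f : ℕ) (hp : n.Prime) (hnf : n = 4 * f + 1) (hf : Odd f)
    (x y : ℤ) (hxy : (n : ℤ) = x ^ 2 + 4 * y ^ 2) (hy : y = -1)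
    (α : ZMod n) (hα : ∀ z : ZMod n, z ≠ 0 → ∃ k : ℕ, z = α ^ k)
    (hTab : ∀ i < 4, ∀ j < 4, 16 * (cycNum n f α i j : ℤ) = oddTable16 (n : ℤ) x y i j)
    (e0 e1 e2 : ZMod 2) (he : e0 + e1 + e2 = 0)
    (a0 a1 a2 a3 : ZMod n → ZMod 2)
    (ha : (a0, a1, a2, a3) ∈
      ({(cycSeq n f α 0 2, cycSeq n f α 0 1, cycSeq n f α 0 2, cycSeq n f α 0 1),
        (cycSeq n f α 0 1, cycSeq n f α 0 2, cycSeq n f α 0 1, cycSeq n f α 0 2),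
        (cycSeq n f α 2 3, cycSeq n f α 0 2, cycSeq n f α 2 3, cycSeq n f α 0 2),
        (cycSeq n f α 0 2, cycSeq n f α 2 3, cycSeq n f α 0 2, cycSeq n f α 2 3),
        (cycSeq n f α 1 3, cycSeq n f α 1 2, cycSeq n f α 1 3, cycSeq n f α 1 2),
        (cycSeq n f α 1 2, cycSeq n f α 1 3, cycSeq n f α 1 2, cycSeq n f α 1 3),
        (cycSeq n f α 0 3, cycSeq n f α 1 3, cycSeq n f α 0 3, cycSeq n f α 1 3),
        (cycSeq n f α 1 3, cycSeq n f α 0 3, cycSeq n f α 1 3, cycSeq n f α 0 3)} :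
        Set ((ZMod n → ZMod 2) × (ZMod n → ZMod 2) × (ZMod n → ZMod 2) × (ZMod n → ZMod 2))))
    (u : ZMod (2 * n) → ZMod 4) (hu : u = constructionI n a0 a1 a2 a3 e0 e1 e2) :
    ∀ τ : ℕ, 1 ≤ τ → τ < 2 * n →
      quadCorr (2 * n) u u ((τ : ℕ) : ZMod (2 * n)) = 2 ∨
        quadCorr (2 * n) u u ((τ : ℕ) : ZMod (2 * n)) = -2 := by
  intro τ hτ1 hτ2
  haveI : Fact n.Prime := ⟨hp⟩
  haveI : NeZero n := ⟨hp.ne_zero⟩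
  have hf0 : 0 < f := by rcases hf with ⟨m, hm⟩; omega
  subst hy
  subst hu
  simp only [Set.mem_insert_iff, Set.mem_singleton_iff, Prod.mk.injEq] at ha
  rcases ha with ⟨rfl, rfl, rfl, rfl⟩ | ⟨rfl, rfl, rfl, rfl⟩ | ⟨rfl, rfl, rfl, rfl⟩ |
    ⟨rfl, rfl, rfl, rfl⟩ | ⟨rfl, rfl, rfl, rfl⟩ | ⟨rfl, rfl, rfl, rfl⟩ |
    ⟨rfl, rfl, rfl, rfl⟩ | ⟨rfl, rfl, rfl, rfl⟩ <;>
    exact branch hp hnf hf0 hα hTab e0 e1 e2 he τ hτ1 hτ2 _ _ _ _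
      (by norm_num) (by norm_num) (by norm_num) (by norm_num) (by norm_num) (by norm_num)
      (by intro k hk; interval_cases k <;> norm_num [oddTable16] <;>
        first | (left; ring1) | (right; ring1))
      (by intro k hk; interval_cases k <;> norm_num [oddTable16] <;>
        first | (left; ring1) | (right; ring1))
      (by norm_num)
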